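/- For every d \geq 2, all complex roots of the polynomial p_d(z) = P_{d,d}(z) are simple (i.e., p_d and its derivative p_d' have no common complex root). -/

import Mathlib

/-- The multinomial coefficient `(a+b+c)! / (a! b! c!)`. -/
def mult3 (a b c : ℕ) : ℕ := (a + b + c).factorial / (a.factorial * b.factorial * c.factorial)

/-- `P k n = ∑_{b=0}^{⌊n/2⌋} multinomial(k+n-b; k, b, n-2b) z^b ∈ ℚ[z]`. -/
noncomputable def Ppoly (k n : ℕ) : Polynomial ℚ :=
  ∑ b ∈ Finset.range (n / 2 + 1), Polynomial.C (mult3 k b (n - 2 * b) : ℚ) * Polynomial.X ^ b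

open Polynomial

lemma mult3_mul (a b c : ℕ) :
    mult3 a b c * (a.factorial * b.factorial * c.factorial) = (a+b+c).factorial := by
  have h1 : (a+b+c).choose a * a.factorial * (b+c).factorial = (a+b+c).factorial := by
    have := Nat.choose_mul_factorial_mul_factorial (Nat.le_add_right a (b+c))
    simpa [Nat.add_sub_cancel_left, add_assoc] using this
  have h2 : (b+c).choose b * b.factorial * c.factorial = (b+c).factorial := by
    have := Nat.choose_mul_factorial_mul_factorial (Nat.le_add_right b c)
    simpa [Nat.add_sub_cancel_left] using this
  have key : (a+b+c).factorial = ((a+b+c).choose a * (b+c).choose b) * (a.factorial * b.factorial * c.factorial) := by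
    rw [← h1, ← h2]; ring
  have hm : mult3 a b c = (a+b+c).choose a * (b+c).choose b := by
    unfold mult3; rw [key, Nat.mul_div_cancel]; positivity
  rw [hm, ← key]

lemma mult3_cast (a b c : ℕ) :
    (mult3 a b c : ℚ) = (a+b+c).factorial / (a.factorial * b.factorial * c.factorial) := by
  have := mult3_mul a b c
  have h : ((mult3 a b c * (a.factorial * b.factorial * c.factorial) : ℕ) : ℚ) = ((a+b+c).factorial : ℚ) := by
    rw [this]
  push_cast at h
  field_simp
  linarith [h]

noncomputable def Acoef (d b : ℕ) : ℚ := if b ≤ d/2 then (mult3 d b (d - 2*b) : ℚ) else 0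

lemma Arec (d b : ℕ) :
    ((b:ℚ)+1) * (2*(d:ℚ) - b) * Acoef d (b+1) = ((d:ℚ) - 2*b) * ((d:ℚ) - 2*b - 1) * Acoef d b := by
  by_cases hb1 : b + 1 ≤ d/2
  · have hb : b ≤ d/2 := by omega
    obtain ⟨c, hc⟩ : ∃ c, d = 2*b+2+c := ⟨d - (2*b+2), by omega⟩
    subst hc
    rw [Acoef, if_pos hb1, Acoef, if_pos hb]
    have e1 : 2*b+2+c - 2*(b+1) = c := by omega
    have e2 : 2*b+2+c - 2*b = c+2 := by omega
    rw [e1, e2, mult3_cast, mult3_cast]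
    have i1 : 2*b+2+c + (b+1) + c = 3*b+2*c+3 := by ring
    have i2 : 2*b+2+c + b + (c+2) = 3*b+2*c+4 := by ring
    rw [i1, i2]
    have f1 : ((3*b+2*c+4).factorial : ℚ) = (3*(b:ℚ)+2*c+4) * ((3*b+2*c+3).factorial : ℚ) := by
      rw [show 3*b+2*c+4 = (3*b+2*c+3)+1 by ring, Nat.factorial_succ]; push_cast; ring
    have f2 : (((b:ℕ)+1).factorial : ℚ) = ((b:ℚ)+1) * (b.factorial : ℚ) := by
      rw [Nat.factorial_succ]; push_cast; ring
    have f3 : (((c:ℕ)+2).factorial : ℚ) = ((c:ℚ)+2) * ((c:ℚ)+1) * (c.factorial : ℚ) := by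
      rw [show c+2 = (c+1)+1 by ring, Nat.factorial_succ, Nat.factorial_succ]; push_cast; ring
    have hne : ∀ n : ℕ, ((n.factorial : ℚ)) ≠ 0 := fun n => by
      exact_mod_cast Nat.factorial_ne_zero n
    rw [f1, f2, f3]
    push_cast
    field_simp
    ring
  · by_cases hb : b ≤ d/2
    · have hA1 : Acoef d (b+1) = 0 := by rw [Acoef, if_neg hb1]
      rw [hA1, mul_zero]
      rcases (by omega : d = 2*b ∨ d = 2*b+1) with h | h
      · have : (d:ℚ) - 2*b = 0 := by subst h; push_cast; ring
        rw [this]; ring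
      · have : (d:ℚ) - 2*b - 1 = 0 := by subst h; push_cast; ring
        rw [this]; ring
    · simp only [Acoef, if_neg hb, if_neg hb1]; ring

lemma coeff_P (d n : ℕ) : (Ppoly d d).coeff n = Acoef d n := by
  rw [Ppoly, Polynomial.finset_sum_coeff]
  simp only [Polynomial.coeff_C_mul, Polynomial.coeff_X_pow, mul_ite, mul_one, mul_zero]
  rw [Finset.sum_ite_eq (Finset.range (d/2+1)) n]
  simp [Acoef, Finset.mem_range, Nat.lt_succ_iff]

lemma ode (d : ℕ) :
    X * (X * (C (4:ℚ) * derivative (derivative (Ppoly d d)))) + X * derivative (derivative (Ppoly d d))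
      + C ((d:ℚ)*((d:ℚ)-1)) * Ppoly d d
    = X * (C (4*(d:ℚ)-6) * derivative (Ppoly d d)) + C (2*(d:ℚ)) * derivative (Ppoly d d) := by
  ext n
  rcases n with _ | _ | n
  · simp only [coeff_add, mul_coeff_zero, coeff_X_zero, zero_mul, coeff_C_mul, coeff_C_zero,
      coeff_derivative, coeff_P, add_zero, zero_add]
    have h := Arec d 0
    push_cast at h ⊢
    linear_combination -h
  · simp only [coeff_add, coeff_X_mul, coeff_C_mul, coeff_C_zero, coeff_derivative, coeff_P,
      mul_coeff_zero, coeff_X_zero, zero_mul, zero_add]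
    have h := Arec d 1
    push_cast at h ⊢
    linear_combination -h
  · simp only [coeff_add, coeff_X_mul, coeff_C_mul, coeff_C_zero, coeff_derivative, coeff_P]
    have h := Arec d (n+2)
    push_cast at h ⊢
    linear_combination -h

/-- All complex roots of `p_d = P_{d,d}` are simple: `p_d` and `p_d'` share no complex root. -/
theorem stmt4 (d : ℕ) (hd : 2 ≤ d) (lam : ℂ) (h0 : Polynomial.aeval lam (Ppoly d d) = 0) :
    Polynomial.aeval lam (Polynomial.derivative (Ppoly d d)) ≠ 0 := by
  intro h1
  have hc0 : (Ppoly d d).coeff 0 ≠ 0 := by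
    rw [coeff_P, Acoef, if_pos (Nat.zero_le _)]
    have hm := mult3_mul d 0 d
    simp only [Nat.mul_zero, Nat.sub_zero] at *
    intro h
    rw [Nat.cast_eq_zero] at h
    rw [h, zero_mul] at hm
    exact (Nat.factorial_ne_zero _) hm.symm
  have hpne : Ppoly d d ≠ 0 := fun h => hc0 (by rw [h, Polynomial.coeff_zero])
  set f := algebraMap ℚ ℂ
  set P : Polynomial ℂ := (Ppoly d d).map f with hPdef
  have hPne : P ≠ 0 := (Polynomial.map_ne_zero_iff (algebraMap ℚ ℂ).injective).mpr hpne
  have h0' : P.eval lam = 0 := by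
    rw [hPdef, Polynomial.eval_map, ← Polynomial.aeval_def, h0]
  have h1' : (derivative P).eval lam = 0 := by
    rw [hPdef, Polynomial.derivative_map, Polynomial.eval_map, ← Polynomial.aeval_def, h1]
  have hl0 : lam ≠ 0 := by
    intro h
    rw [h, ← Polynomial.coeff_zero_eq_eval_zero, hPdef, Polynomial.coeff_map] at h0'
    exact hc0 (by exact_mod_cast (_root_.map_eq_zero f).mp h0')
  set m := P.rootMultiplicity lam with hmdef
  have hm2 : 1 < m := (Polynomial.one_lt_rootMultiplicity_iff_isRoot hPne).mpr ⟨h0', h1'⟩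
  obtain ⟨k, hk⟩ : ∃ k, m = k + 2 := ⟨m - 2, by omega⟩
  set t : Polynomial ℂ := X - C lam with htdef
  set q : Polynomial ℂ := P /ₘ t ^ m with hqdef
  have hq : q.eval lam ≠ 0 := Polynomial.eval_divByMonic_pow_rootMultiplicity_ne_zero lam hPne
  have hP : t ^ (k+2) * q = P := by
    rw [← hk]; exact Polynomial.pow_mul_divByMonic_rootMultiplicity_eq P lam
  have htne : t ≠ 0 := Polynomial.X_sub_C_ne_zero lam
  have oc := congrArg (Polynomial.map f) (ode d)
  simp only [Polynomial.map_add, Polynomial.map_mul, Polynomial.map_X, Polynomial.map_C,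
    ← Polynomial.derivative_map, map_mul, map_sub, map_natCast, map_one, map_ofNat,
    Polynomial.map_natCast, Polynomial.map_ofNat, Polynomial.map_sub, Polynomial.map_one,
    ← hPdef] at oc
  have hD1 : derivative P = t^(k+1) * (((k:Polynomial ℂ)+2) * q + t * derivative q) := by
    rw [← hP]
    simp only [derivative_mul, derivative_pow, htdef, derivative_sub, derivative_X,
      derivative_C, sub_zero, mul_one, Nat.cast_add, Nat.cast_ofNat, Nat.cast_one,
      map_add, map_ofNat, derivative_ofNat, derivative_natCast, Polynomial.C_eq_natCast,
      show k+2-1 = k+1 from rfl]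
    ring
  have hD2 : derivative (derivative P)
      = t^k * ((((k:Polynomial ℂ)+2)*((k:Polynomial ℂ)+1)) * q
          + (2*((k:Polynomial ℂ)+2)) * (t * derivative q)
          + t^2 * derivative (derivative q)) := by
    rw [hD1]
    simp only [derivative_mul, derivative_pow, htdef, derivative_sub, derivative_X,
      derivative_C, sub_zero, mul_one, Nat.cast_add, Nat.cast_ofNat, Nat.cast_one,
      map_add, map_mul, map_one, map_ofNat, derivative_ofNat, derivative_natCast,
      Polynomial.C_eq_natCast, show k+1-1 = k from rfl]
    ring
  set S2 : Polynomial ℂ := (((k:Polynomial ℂ)+2)*((k:Polynomial ℂ)+1)) * q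
      + (2*((k:Polynomial ℂ)+2)) * (t * derivative q) + t^2 * derivative (derivative q) with hS2
  set S1 : Polynomial ℂ := ((k:Polynomial ℂ)+2) * q + t * derivative q with hS1
  rw [hD2, hD1, ← hP] at oc
  have key : t^k * (X * (4 * X + 1) * S2
      - ((4*(d:Polynomial ℂ)-6) * X + 2*(d:Polynomial ℂ)) * S1 * t
      + (d:Polynomial ℂ)*((d:Polynomial ℂ)-1) * (t^2 * q)) = 0 := by
    linear_combination oc
  have hE : X * (4 * X + 1) * S2
      - ((4*(d:Polynomial ℂ)-6) * X + 2*(d:Polynomial ℂ)) * S1 * t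
      + (d:Polynomial ℂ)*((d:Polynomial ℂ)-1) * (t^2 * q) = 0 :=
    mul_left_cancel₀ (pow_ne_zero k htne) (by rw [key, mul_zero])
  have hk2 : ((k:ℂ)+2) ≠ 0 := by
    have : ((k+2 : ℕ) : ℂ) ≠ 0 := Nat.cast_ne_zero.mpr (by omega)
    push_cast at this; exact this
  by_cases h4 : 4*lam + 1 = 0
  · have h4l : (4:ℂ)*lam = -1 := by linear_combination h4
    have hCl : (4:Polynomial ℂ) * C lam = -1 := by
      rw [show (4:Polynomial ℂ) = C 4 from (map_ofNat C 4).symm, ← C_mul, h4l]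
      simp
    have hfac : (4:Polynomial ℂ) * X + 1 = 4 * t := by
      rw [htdef]; linear_combination hCl
    have hG : t * (X * 4 * S2 - ((4*(d:Polynomial ℂ)-6) * X + 2*(d:Polynomial ℂ)) * S1
        + (d:Polynomial ℂ)*((d:Polynomial ℂ)-1) * (t * q)) = 0 := by
      rw [← hE, hfac]; ring
    have hG0 := mul_left_cancel₀ htne (by rw [hG, mul_zero] :
      t * (X * 4 * S2 - ((4*(d:Polynomial ℂ)-6) * X + 2*(d:Polynomial ℂ)) * S1
        + (d:Polynomial ℂ)*((d:Polynomial ℂ)-1) * (t * q)) = t * 0)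
    have hev := congrArg (Polynomial.eval lam) hG0
    simp only [hS1, hS2, htdef, eval_add, eval_sub, eval_mul, eval_pow, eval_X, eval_C,
      eval_one, eval_zero, eval_natCast, eval_ofNat, sub_self, mul_zero, zero_mul,
      add_zero, zero_add] at hev
    have hz : ((2*k + 2*d + 5 : ℕ) : ℂ) * (((k:ℂ)+2) * q.eval lam) = 0 := by
      push_cast
      linear_combination (-2 : ℂ) * hev
        + ((2*(k:ℂ) - 2*(d:ℂ) + 5) * (((k:ℂ)+2) * q.eval lam)) * h4
    rcases mul_eq_zero.mp hz with h | h
    · exact Nat.cast_ne_zero.mpr (by omega) h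
    · rcases mul_eq_zero.mp h with h | h
      · exact hk2 h
      · exact hq h
  · have hev := congrArg (Polynomial.eval lam) hE
    simp only [hS1, hS2, htdef, eval_add, eval_sub, eval_mul, eval_pow, eval_X, eval_C,
      eval_one, eval_zero, eval_natCast, eval_ofNat, sub_self, mul_zero, zero_mul,
      add_zero, zero_add] at hev
    have hz : lam * (4*lam+1) * ((((k:ℂ)+2)*((k:ℂ)+1)) * q.eval lam) = 0 := by
      linear_combination hev
    rcases mul_eq_zero.mp hz with h | h
    · rcases mul_eq_zero.mp h with h | h
      · exact hl0 h
      · exact h4 h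
    · rcases mul_eq_zero.mp h with h | h
      · rcases mul_eq_zero.mp h with h | h
        · exact hk2 h
        · have hne : ((k+1 : ℕ) : ℂ) ≠ 0 := Nat.cast_ne_zero.mpr (by omega)
          push_cast at hne; exact hne h
      · exact hq h
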